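/- Let A ∈ ℝ^{m×n}, b ∈ ℝ^m, λ > 0, and let x̄ ∈ ℝⁿ and ȳ ∈ ℝ^m. Then the following are equivalent: (i) x̄ is a solution of the SR-LASSO and ȳ maximizes ⟨b, y⟩ over the set {y ∈ ℝ^m : ‖Aᵀy‖_∞ ≤ λ and ‖y‖₂ ≤ 1}; (ii) ‖Ax̄ − b‖₂ + λ‖x̄‖₁ = ⟨b, ȳ⟩, ‖Aᵀȳ‖_∞ ≤ λ, and ‖ȳ‖₂ ≤ 1. -/

import Mathlib

open Matrix Filter Topology
open scoped BigOperators Classical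

noncomputable def l2 {k : ℕ} (x : Fin k → ℝ) : ℝ := Real.sqrt (∑ i, (x i) ^ 2)

noncomputable def l1 {k : ℕ} (x : Fin k → ℝ) : ℝ := ∑ i, |x i|

noncomputable def linf {k : ℕ} (x : Fin k → ℝ) : ℝ := sSup (Set.range fun i => |x i|)

noncomputable def dotp {k : ℕ} (x y : Fin k → ℝ) : ℝ := ∑ i, x i * y i

noncomputable def pinv {m s : ℕ} (M : Matrix (Fin m) (Fin s) ℝ) :
    Matrix (Fin s) (Fin m) ℝ := (Mᵀ * M)⁻¹ * Mᵀ

/-- The SR-LASSO objective f_{A,b,λ}(x) := ‖Ax − b‖₂ + λ‖x‖₁. -/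
noncomputable def srObj {m n : ℕ} (A : Matrix (Fin m) (Fin n) ℝ) (b : Fin m → ℝ)
    (lam : ℝ) (x : Fin n → ℝ) : ℝ := l2 (A.mulVec x - b) + lam * l1 x

/-- x is a solution of the SR-LASSO with data (A, b, λ). -/
def IsSol {m n : ℕ} (A : Matrix (Fin m) (Fin n) ℝ) (b : Fin m → ℝ) (lam : ℝ)
    (x : Fin n → ℝ) : Prop := ∀ w : Fin n → ℝ, srObj A b lam x ≤ srObj A b lam w

/-- y is feasible for the SR-LASSO dual: ‖Aᵀy‖_∞ ≤ λ and ‖y‖₂ ≤ 1. -/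
noncomputable def DualFeas {m n : ℕ} (A : Matrix (Fin m) (Fin n) ℝ) (lam : ℝ)
    (y : Fin m → ℝ) : Prop := linf (Aᵀ.mulVec y) ≤ lam ∧ l2 y ≤ 1

/-- y is a solution of the SR-LASSO dual: it is feasible and maximizes ⟨b, ·⟩
over the feasible set. -/
noncomputable def IsDualSol {m n : ℕ} (A : Matrix (Fin m) (Fin n) ℝ) (b : Fin m → ℝ)
    (lam : ℝ) (y : Fin m → ℝ) : Prop :=
  DualFeas A lam y ∧ ∀ y' : Fin m → ℝ, DualFeas A lam y' → dotp b y' ≤ dotp b y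

-- view as Euclidean space
abbrev toE {k : ℕ} (x : Fin k → ℝ) : EuclideanSpace ℝ (Fin k) := WithLp.toLp 2 x

lemma l2_eq_norm {k : ℕ} (x : Fin k → ℝ) : l2 x = ‖toE x‖ := by
  rw [EuclideanSpace.norm_eq]
  simp [l2, toE, sq_abs]

lemma dotp_eq_inner {k : ℕ} (x y : Fin k → ℝ) : dotp x y = (inner ℝ (toE x) (toE y) : ℝ) := by
  rw [PiLp.inner_apply]
  simp [dotp, toE, RCLike.inner_apply, mul_comm]

lemma l2_nonneg {k : ℕ} (x : Fin k → ℝ) : 0 ≤ l2 x := by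
  rw [l2_eq_norm]; exact norm_nonneg _

lemma l2_neg {k : ℕ} (x : Fin k → ℝ) : l2 (-x) = l2 x := by
  simp [l2, neg_sq]

lemma l2_add_le {k : ℕ} (x y : Fin k → ℝ) : l2 (x + y) ≤ l2 x + l2 y := by
  simpa [l2_eq_norm] using norm_add_le (toE x) (toE y)

lemma l2_smul {k : ℕ} (t : ℝ) (x : Fin k → ℝ) : l2 (t • x) = |t| * l2 x := by
  simpa [l2_eq_norm, Real.norm_eq_abs, WithLp.toLp_smul] using norm_smul t (toE x)

lemma dotp_le_l2 {k : ℕ} (x y : Fin k → ℝ) : dotp x y ≤ l2 x * l2 y := by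
  rw [dotp_eq_inner, l2_eq_norm, l2_eq_norm]; exact real_inner_le_norm _ _

lemma l1_nonneg {k : ℕ} (x : Fin k → ℝ) : 0 ≤ l1 x :=
  Finset.sum_nonneg fun i _ => abs_nonneg _

lemma abs_le_linf {k : ℕ} (x : Fin k → ℝ) (i : Fin k) : |x i| ≤ linf x :=
  le_csSup (Set.Finite.bddAbove (Set.finite_range _)) ⟨i, rfl⟩

lemma linf_nonneg {k : ℕ} (x : Fin k → ℝ) : 0 ≤ linf x := by
  rcases Nat.eq_zero_or_pos k with h | h
  · subst h; simp [linf, Set.range_eq_empty, Real.sSup_empty]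
  · exact le_trans (abs_nonneg _) (abs_le_linf x ⟨0, h⟩)

lemma linf_le {k : ℕ} (x : Fin k → ℝ) {c : ℝ} (hc : 0 ≤ c) (h : ∀ i, |x i| ≤ c) :
    linf x ≤ c := by
  rcases Nat.eq_zero_or_pos k with hk | hk
  · subst hk; simpa [linf, Set.range_eq_empty, Real.sSup_empty] using hc
  · haveI : Nonempty (Fin k) := ⟨⟨0, hk⟩⟩
    exact csSup_le (Set.range_nonempty _) (by rintro r ⟨i, rfl⟩; exact h i)

lemma dotp_le_l1_linf {k : ℕ} (x y : Fin k → ℝ) : dotp x y ≤ l1 x * linf y := by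
  rw [l1, Finset.sum_mul]
  refine Finset.sum_le_sum fun i _ => ?_
  calc x i * y i ≤ |x i * y i| := le_abs_self _
    _ = |x i| * |y i| := abs_mul _ _
    _ ≤ |x i| * linf y := by
        exact mul_le_mul_of_nonneg_left (abs_le_linf y i) (abs_nonneg _)

lemma dotp_comm {k : ℕ} (x y : Fin k → ℝ) : dotp x y = dotp y x := by
  simp [dotp, mul_comm]

lemma dotp_add_left {k : ℕ} (x y z : Fin k → ℝ) :
    dotp (x + y) z = dotp x z + dotp y z := by
  simp [dotp, add_mul, Finset.sum_add_distrib]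

lemma dotp_neg_left {k : ℕ} (x y : Fin k → ℝ) : dotp (-x) y = -dotp x y := by
  simp [dotp]

lemma dotp_neg_right {k : ℕ} (x y : Fin k → ℝ) : dotp x (-y) = -dotp x y := by
  simp [dotp]

lemma dotp_add_right {k : ℕ} (x y z : Fin k → ℝ) :
    dotp x (y + z) = dotp x y + dotp x z := by
  simp [dotp, mul_add, Finset.sum_add_distrib]

lemma dotp_smul_right {k : ℕ} (t : ℝ) (x y : Fin k → ℝ) :
    dotp x (t • y) = t * dotp x y := by
  simp [dotp, Finset.mul_sum, mul_left_comm]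

lemma dotp_mulVec {m n : ℕ} (A : Matrix (Fin m) (Fin n) ℝ) (x : Fin n → ℝ)
    (y : Fin m → ℝ) : dotp (A.mulVec x) y = dotp x (Aᵀ.mulVec y) := by
  show (A *ᵥ x) ⬝ᵥ y = x ⬝ᵥ (Aᵀ *ᵥ y)
  rw [Matrix.dotProduct_mulVec, Matrix.vecMul_transpose]

/-- Weak duality. -/
lemma weak_duality {m n : ℕ} (A : Matrix (Fin m) (Fin n) ℝ) (b : Fin m → ℝ)
    {lam : ℝ} (hlam : 0 ≤ lam) (x : Fin n → ℝ) {y : Fin m → ℝ}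
    (hy : DualFeas A lam y) : dotp b y ≤ srObj A b lam x := by
  obtain ⟨h1, h2⟩ := hy
  have key : b = (b - A.mulVec x) + A.mulVec x := by ring
  have e1 : dotp b y = dotp (b - A.mulVec x) y + dotp (A.mulVec x) y := by
    rw [← dotp_add_left]; norm_num
  have c1 : dotp (b - A.mulVec x) y ≤ l2 (A.mulVec x - b) := by
    calc dotp (b - A.mulVec x) y ≤ l2 (b - A.mulVec x) * l2 y := dotp_le_l2 _ _
      _ ≤ l2 (b - A.mulVec x) * 1 := by
          exact mul_le_mul_of_nonneg_left h2 (l2_nonneg _)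
      _ = l2 (A.mulVec x - b) := by rw [mul_one, ← l2_neg, neg_sub]
  have c2 : dotp (A.mulVec x) y ≤ lam * l1 x := by
    calc dotp (A.mulVec x) y = dotp x (Aᵀ.mulVec y) := dotp_mulVec _ _ _
      _ ≤ l1 x * linf (Aᵀ.mulVec y) := dotp_le_l1_linf _ _
      _ ≤ l1 x * lam := mul_le_mul_of_nonneg_left h1 (l1_nonneg _)
      _ = lam * l1 x := mul_comm _ _
  rw [e1, srObj]; exact add_le_add c1 c2

/-- Hahn-Banach sandwich: an affine function between a continuous concave
function and a convex function. -/
lemma sandwich {k : ℕ} (g q : (Fin k → ℝ) → ℝ)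
    (hgc : ∀ x y θ τ : _, 0 ≤ θ → 0 ≤ τ → θ + τ = 1 →
      θ * g x + τ * g y ≤ g (θ • x + τ • y))
    (hqc : ∀ x y θ τ : _, 0 ≤ θ → 0 ≤ τ → θ + τ = 1 →
      q (θ • x + τ • y) ≤ θ * q x + τ * q y)
    (hgcont : Continuous g) (hle : ∀ d, g d ≤ q d) :
    ∃ c β, ∀ d : Fin k → ℝ, g d ≤ dotp c d + β ∧ dotp c d + β ≤ q d := by
  classical
  set S₁ : Set ((Fin k → ℝ) × ℝ) := {p | p.2 < g p.1} with hS₁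
  set S₂ : Set ((Fin k → ℝ) × ℝ) := {p | q p.1 ≤ p.2} with hS₂
  have hS₁o : IsOpen S₁ := isOpen_lt continuous_snd (hgcont.comp continuous_fst)
  have hS₁c : Convex ℝ S₁ := by
    rintro ⟨x, s⟩ hx ⟨y, t⟩ hy θ τ hθ hτ hsum
    simp only [hS₁, Set.mem_setOf_eq, Prod.smul_mk, Prod.mk_add_mk, smul_eq_mul] at hx hy ⊢
    have : θ * s + τ * t < θ * g x + τ * g y := by
      rcases eq_or_lt_of_le hθ with h | h
      · have hτ1 : τ = 1 := by linarith
        simp [← h, hτ1]; linarith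
      · have h1 : θ * s < θ * g x := by exact (mul_lt_mul_iff_right₀ h).2 hx
        have h2 : τ * t ≤ τ * g y := mul_le_mul_of_nonneg_left (le_of_lt hy) hτ
        linarith
    exact lt_of_lt_of_le this (hgc x y θ τ hθ hτ hsum)
  have hS₂c : Convex ℝ S₂ := by
    rintro ⟨x, s⟩ hx ⟨y, t⟩ hy θ τ hθ hτ hsum
    simp only [hS₂, Set.mem_setOf_eq, Prod.smul_mk, Prod.mk_add_mk, smul_eq_mul] at hx hy ⊢
    have := hqc x y θ τ hθ hτ hsum
    have h1 : θ * q x ≤ θ * s := mul_le_mul_of_nonneg_left hx hθ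
    have h2 : τ * q y ≤ τ * t := mul_le_mul_of_nonneg_left hy hτ
    exact le_trans this (by linarith)
  have hdisj : Disjoint S₁ S₂ := by
    rw [Set.disjoint_left]
    rintro ⟨x, s⟩ hx hy
    simp only [hS₁, hS₂, Set.mem_setOf_eq] at hx hy
    exact absurd (lt_of_le_of_lt (le_trans (hle x) hy) hx) (lt_irrefl _)
  obtain ⟨f, u, hfu1, hfu2⟩ := geometric_hahn_banach_open hS₁c hS₁o hS₂c hdisj
  set γ : ℝ := f (0, 1) with hγ
  have hsplit : ∀ (d : Fin k → ℝ) (t : ℝ), f (d, t) = f (d, 0) + t * γ := by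
    intro d t
    have : (d, t) = (d, (0:ℝ)) + t • ((0 : Fin k → ℝ), (1:ℝ)) := by
      simp [Prod.ext_iff]
    rw [this, map_add, _root_.map_smul, smul_eq_mul, hγ]
  -- γ > 0
  have hγnonneg : 0 ≤ γ := by
    by_contra h
    push_neg at h
    obtain ⟨t, ht⟩ : ∃ t : ℝ, f (0, 0) + t * γ < u ∧ q 0 ≤ t := by
      refine ⟨max (q 0) ((u - 1 - f (0,0))/γ), ⟨?_, le_max_left _ _⟩⟩
      have : (u - 1 - f (0,0))/γ ≥ max (q 0) ((u - 1 - f (0,0))/γ) ∨ True := Or.inr trivial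
      have hle' : max (q 0) ((u - 1 - f (0,0))/γ) ≥ (u - 1 - f (0,0))/γ := le_max_right _ _
      have := mul_le_mul_of_nonpos_right hle' (le_of_lt h)
      rw [div_mul_cancel₀] at this
      · linarith
      · exact ne_of_lt h
    have := hfu2 (0, t) ht.2
    rw [hsplit] at this
    linarith [ht.1]
  have hγpos : 0 < γ := by
    rcases eq_or_lt_of_le hγnonneg with h | h
    · exfalso
      have h1 : f ((0 : Fin k → ℝ), g 0 - 1) < u := hfu1 _ (by simp [hS₁])
      have h2 : u ≤ f ((0 : Fin k → ℝ), q 0) := hfu2 _ (by simp [hS₂])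
      rw [hsplit] at h1 h2
      rw [← h] at h1 h2
      linarith
    · exact h
  -- bounds
  have hub : ∀ d, f (d, 0) + g d * γ ≤ u := by
    intro d
    have key : ∀ ε > (0:ℝ), f (d, 0) + (g d - ε) * γ < u := fun ε hε =>
      (hsplit d _ ▸ hfu1 (d, g d - ε) (by simp [hS₁, hε]))
    by_contra h
    push_neg at h
    have hε : (f (d,0) + g d * γ - u) / γ > 0 := div_pos (by linarith) hγpos
    have := key _ hε
    rw [sub_mul, div_mul_cancel₀ _ (ne_of_gt hγpos)] at this
    linarith
  have hlb : ∀ d, u ≤ f (d, 0) + q d * γ := by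
    intro d
    have := hfu2 (d, q d) (by simp [hS₂])
    rwa [hsplit] at this
  -- build c
  set c : Fin k → ℝ := fun j => -f ((fun i => if j = i then 1 else 0 : Fin k → ℝ), 0) / γ
    with hc
  have hrep : ∀ d : Fin k → ℝ, dotp c d = -f (d, 0) / γ := by
    intro d
    have hd : ((d, (0:ℝ)) : (Fin k → ℝ) × ℝ) = ∑ j : Fin k,
        d j • (((fun i => if j = i then 1 else 0 : Fin k → ℝ)), (0:ℝ)) := by
      apply Prod.ext
      · simp only [Prod.fst_sum, Prod.smul_mk]
        exact pi_eq_sum_univ d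
      · simp [Prod.snd_sum, Prod.smul_mk]
    have hf : f (d, 0) = ∑ j : Fin k, d j *
        f (((fun i => if j = i then 1 else 0 : Fin k → ℝ)), (0:ℝ)) := by
      conv_lhs => rw [hd]
      rw [map_sum]
      exact Finset.sum_congr rfl fun j _ => by rw [_root_.map_smul, smul_eq_mul]
    rw [dotp, hf, eq_div_iff (ne_of_gt hγpos), Finset.sum_mul, ← Finset.sum_neg_distrib]
    refine Finset.sum_congr rfl fun j _ => ?_
    simp only [hc]
    rw [div_mul_eq_mul_div, div_mul_cancel₀ _ (ne_of_gt hγpos)]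
    ring
  refine ⟨c, u / γ, fun d => ?_⟩
  have heq : dotp c d + u / γ = (u - f (d, 0)) / γ := by rw [hrep d]; ring
  constructor
  · rw [heq]
    exact (le_div_iff₀ hγpos).2 (by linarith [hub d])
  · rw [heq]
    exact (div_le_iff₀ hγpos).2 (by linarith [hlb d])

lemma eq_zero_of_forall_mul_le {a β C : ℝ} (h : ∀ t : ℝ, t * a + β ≤ C) : a = 0 := by
  by_contra ha
  have := h ((C - β + 1) / a)
  rw [div_mul_cancel₀ _ ha] at this
  linarith

lemma nonpos_of_forall_mul_le {b M : ℝ} (h : ∀ t : ℝ, 0 < t → t * b ≤ M) : b ≤ 0 := by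
  by_contra hb
  push_neg at hb
  have := h ((max M 0 + 1) / b) (div_pos (by positivity) hb)
  rw [div_mul_cancel₀ _ (ne_of_gt hb)] at this
  have := le_max_left M 0
  linarith [le_max_left M (0:ℝ)]

lemma nonpos_of_forall_le_div {B V : ℝ} (h : ∀ t : ℝ, 0 < t → B ≤ V^2/(2*t)) : B ≤ 0 := by
  by_contra hB
  push_neg at hB
  have ht : (0:ℝ) < V^2/B + 1 := by positivity
  have h1 := h _ ht
  rw [le_div_iff₀ (by positivity)] at h1
  have key : V^2/B*B = V^2 := div_mul_cancel₀ _ (ne_of_gt hB)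
  nlinarith [sq_nonneg V]

set_option maxHeartbeats 1000000 in
/-- Representation of affine minorants of d ↦ ‖Ad - v‖. -/
lemma represent {m n : ℕ} (A : Matrix (Fin m) (Fin n) ℝ) (v : Fin m → ℝ)
    (c : Fin n → ℝ) (β : ℝ)
    (h : ∀ d : Fin n → ℝ, dotp c d + β ≤ l2 (A.mulVec d - v)) :
    ∃ y : Fin m → ℝ, l2 y ≤ 1 ∧ Aᵀ.mulVec y = c ∧ β ≤ dotp (-v) y := by
  classical
  set E := EuclideanSpace ℝ (Fin m) with hE
  set E' := EuclideanSpace ℝ (Fin n) with hE'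
  let T : E' →ₗ[ℝ] E :=
    { toFun := fun x => toE (A.mulVec x)
      map_add' := fun x y => by
        simp only [toE]; rw [WithLp.ofLp_add, Matrix.mulVec_add, WithLp.toLp_add]
      map_smul' := fun t x => by
        simp only [toE, RingHom.id_apply]; rw [WithLp.ofLp_smul, Matrix.mulVec_smul, WithLp.toLp_smul] }
  let T' : E →ₗ[ℝ] E' :=
    { toFun := fun x => toE (Aᵀ.mulVec x)
      map_add' := fun x y => by
        simp only [toE]; rw [WithLp.ofLp_add, Matrix.mulVec_add, WithLp.toLp_add]
      map_smul' := fun t x => by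
        simp only [toE, RingHom.id_apply]; rw [WithLp.ofLp_smul, Matrix.mulVec_smul, WithLp.toLp_smul] }
  have hadj : ∀ (d : E') (y : E), (inner ℝ (T d) y : ℝ) = inner ℝ d (T' y) := by
    intro d y
    have h1 : (inner ℝ (T d) y : ℝ) = dotp (A.mulVec d) y := (dotp_eq_inner _ _).symm
    have h2 : (inner ℝ d (T' y) : ℝ) = dotp d (Aᵀ.mulVec y) := (dotp_eq_inner _ _).symm
    rw [h1, h2, dotp_mulVec]
  set S : Submodule ℝ E := LinearMap.range T with hS
  -- c is in the range of T'
  have hcmem : toE c ∈ LinearMap.range T' := by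
    have hker : LinearMap.ker T = (LinearMap.range T')ᗮ := by
      ext x
      constructor
      · intro hx
        rw [Submodule.mem_orthogonal]
        rintro u ⟨y, rfl⟩
        have := hadj x y
        rw [LinearMap.mem_ker.1 hx] at this
        rw [real_inner_comm, ← this, inner_zero_left]
      · intro hx
        rw [Submodule.mem_orthogonal] at hx
        rw [LinearMap.mem_ker]
        have h0 : (inner ℝ (T x) (T x) : ℝ) = 0 := by
          rw [hadj x (T x)]
          have := hx (T' (T x)) ⟨T x, rfl⟩
          rwa [real_inner_comm]
        exact inner_self_eq_zero.1 h0
    have : (LinearMap.ker T)ᗮ = LinearMap.range T' := by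
      rw [hker, Submodule.orthogonal_orthogonal]
    rw [← this, Submodule.mem_orthogonal]
    intro u hu
    -- u ∈ ker T : dotp c u = 0
    have hker0 : A.mulVec u = 0 := by
      have := LinearMap.mem_ker.1 hu
      exact congrArg (fun z => (WithLp.ofLp z : Fin m → ℝ)) this
    have : dotp c u = 0 := by
      apply eq_zero_of_forall_mul_le (β := β) (C := l2 (-v))
      intro t
      have := h (t • u)
      rw [Matrix.mulVec_smul, hker0, smul_zero, zero_sub] at this
      calc t * dotp c u + β = dotp c (t • u) + β := by rw [dotp_smul_right]
        _ ≤ l2 (-v) := this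
    rw [real_inner_comm]
    exact (dotp_eq_inner c u).symm.trans this
  obtain ⟨y₁, hy₁⟩ := hcmem
  set y₂ₛ := S.orthogonalProjectionOnto y₁ with hy₂ₛ
  set y₂ : E := (y₂ₛ : E) with hy₂
  have hy₂S : y₂ ∈ S := y₂ₛ.2
  have hy₁y₂ : y₁ - y₂ ∈ Sᗮ := Submodule.sub_starProjection_mem_orthogonal (K := S) y₁
  -- T' kills S-perp
  have hT'perp : ∀ w : E, w ∈ Sᗮ → T' w = 0 := by
    intro w hw
    have : ∀ d : E', (inner ℝ d (T' w) : ℝ) = 0 := by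
      intro d
      rw [← hadj]
      exact (Submodule.mem_orthogonal S w).1 hw _ ⟨toE d, rfl⟩
    have h0 := this (T' w)
    exact inner_self_eq_zero.1 h0
  have hT'y₂ : T' y₂ = toE c := by
    have : T' (y₁ - y₂) = 0 := hT'perp _ hy₁y₂
    rw [map_sub, sub_eq_zero] at this
    rw [← this, hy₁]
  -- the key inequality on S
  have hstar : ∀ d : Fin n → ℝ, (inner ℝ y₂ (T (toE d)) : ℝ) + β ≤ ‖T (toE d) - toE v‖ := by
    intro d
    have h1 : (inner ℝ y₂ (T (toE d)) : ℝ) = dotp c d := by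
      rw [real_inner_comm, hadj, hT'y₂]
      exact (dotp_eq_inner d c).symm.trans (dotp_comm d c)
    have h2 : ‖T (toE d) - toE v‖ = l2 (A.mulVec d - v) := (l2_eq_norm _).symm
    rw [h1, h2]
    exact h d
  have hstarS : ∀ w, w ∈ S → (inner ℝ y₂ w : ℝ) + β ≤ ‖w - toE v‖ := by
    rintro w ⟨d, rfl⟩
    exact hstar d
  set a := ‖y₂‖ with haDef
  have ha0 : 0 ≤ a := norm_nonneg _
  have ha1 : a ≤ 1 := by
    rcases eq_or_ne y₂ 0 with h0 | h0
    · simp [haDef, h0]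
    · have hpos : 0 < a := norm_pos_iff.2 h0
      have key : ∀ t : ℝ, 0 < t → t * (a^2 - a) ≤ ‖toE v‖ - β := by
        intro t ht
        have h1 := hstarS _ (S.smul_mem t hy₂S)
        rw [real_inner_smul_right, real_inner_self_eq_norm_sq] at h1
        have h2 : ‖t • y₂ - toE v‖ ≤ t * a + ‖toE v‖ := by
          calc ‖t • y₂ - toE v‖ ≤ ‖t • y₂‖ + ‖toE v‖ := norm_sub_le _ _
            _ = t * a + ‖toE v‖ := by
                rw [norm_smul, Real.norm_eq_abs, abs_of_pos ht]
        nlinarith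
      have := nonpos_of_forall_mul_le key
      nlinarith
  set v₁ : E := (S.orthogonalProjectionOnto (toE v) : E) with hv₁Def
  set v₂ : E := toE v - v₁ with hv₂Def
  have hv₁S : v₁ ∈ S := (S.orthogonalProjectionOnto (toE v)).2
  have hv₂perp : v₂ ∈ Sᗮ := Submodule.sub_starProjection_mem_orthogonal (K := S) (toE v)
  have hiy₂v₂ : (inner ℝ y₂ v₂ : ℝ) = 0 := (Submodule.mem_orthogonal S v₂).1 hv₂perp y₂ hy₂S
  have hiv₁v₂ : (inner ℝ v₁ v₂ : ℝ) = 0 := (Submodule.mem_orthogonal S v₂).1 hv₂perp v₁ hv₁S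
  set V := ‖v₂‖ with hVDef
  have hV0 : 0 ≤ V := norm_nonneg _
  have hsq : (0:ℝ) ≤ 1 - a^2 := by nlinarith
  have hnorm : ∀ t : ℝ, ‖v₁ + t • y₂ - toE v‖ = Real.sqrt (t^2*a^2 + V^2) := by
    intro t
    have he : v₁ + t • y₂ - toE v = t • y₂ - v₂ := by rw [hv₂Def]; abel
    rw [he]
    have h2 : ‖t • y₂ - v₂‖^2 = t^2*a^2 + V^2 := by
      rw [norm_sub_sq_real, real_inner_smul_left, hiy₂v₂, norm_smul, Real.norm_eq_abs]
      rw [mul_pow, sq_abs]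
      ring
    rw [← h2, Real.sqrt_sq (norm_nonneg _)]
  have hip : ∀ t : ℝ, (inner ℝ y₂ (v₁ + t • y₂) : ℝ) = inner ℝ y₂ v₁ + t * a^2 := by
    intro t
    rw [inner_add_right, real_inner_smul_right, real_inner_self_eq_norm_sq]
  have hB : β + (inner ℝ y₂ v₁ : ℝ) ≤ V * Real.sqrt (1 - a^2) := by
    rcases lt_or_eq_of_le ha1 with ha | ha
    · set s := Real.sqrt (1 - a^2) with hsDef
      have hs2 : s^2 = 1 - a^2 := Real.sq_sqrt hsq
      have hs : 0 < s := Real.sqrt_pos.2 (by nlinarith)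
      set t := V / s with htDef
      have htV : t * s = V := div_mul_cancel₀ _ (ne_of_gt hs)
      have h1 := hstarS _ (S.add_mem hv₁S (S.smul_mem t hy₂S))
      rw [hip t, hnorm t] at h1
      have hts : t^2*a^2 + V^2 = t^2 := by
        have : V^2 = t^2 * s^2 := by rw [← htV]; ring
        rw [this, hs2]; ring
      have ht0 : 0 ≤ t := div_nonneg hV0 (le_of_lt hs)
      rw [hts, Real.sqrt_sq ht0] at h1
      have e1 : t - t*a^2 = V * s := by
        have : t - t*a^2 = t * s^2 := by rw [hs2]; ring
        rw [this, show t * s^2 = (t*s)*s by ring, htV]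
      linarith
    · have ha' : a = 1 := ha
      have key : ∀ t : ℝ, 0 < t → β + (inner ℝ y₂ v₁ : ℝ) ≤ V^2/(2*t) := by
        intro t ht
        have h1 := hstarS _ (S.add_mem hv₁S (S.smul_mem t hy₂S))
        rw [hip t, hnorm t] at h1
        have h2 : Real.sqrt (t^2*a^2 + V^2) ≤ t + V^2/(2*t) := by
          have hb : t^2*a^2 + V^2 ≤ (t + V^2/(2*t))^2 := by
            rw [ha']
            have : (t + V^2/(2*t))^2 = t^2 + V^2 + (V^2/(2*t))^2 := by
              field_simp
              ring
            nlinarith [sq_nonneg (V^2/(2*t))]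
          calc Real.sqrt (t^2*a^2 + V^2) ≤ Real.sqrt ((t + V^2/(2*t))^2) :=
                Real.sqrt_le_sqrt hb
            _ = t + V^2/(2*t) := Real.sqrt_sq (by positivity)
        rw [ha'] at h1 h2
        have h3 := h1.trans h2
        have ht1 : t * (1:ℝ)^2 = t := by ring
        rw [ht1] at h3
        linarith
      have := nonpos_of_forall_le_div key
      have : Real.sqrt (1 - a^2) = 0 := by rw [ha']; norm_num
      rw [this, mul_zero]
      exact nonpos_of_forall_le_div key
  rcases eq_or_ne V 0 with hV | hV
  · have hv₂0 : v₂ = 0 := norm_eq_zero.1 hV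
    have htv : toE v = v₁ := by
      have := hv₂Def ▸ hv₂0
      exact sub_eq_zero.1 this
    refine ⟨y₂, ?_, ?_, ?_⟩
    · rw [l2_eq_norm]
      exact ha1
    · exact congrArg WithLp.ofLp hT'y₂
    · have e : dotp (-v) y₂ = -(inner ℝ (toE v) y₂ : ℝ) :=
        (dotp_eq_inner _ _).trans (inner_neg_left _ _)
      rw [e, htv, real_inner_comm y₂ v₁]
      have hB0 : V * Real.sqrt (1 - a^2) = 0 := by rw [hV, zero_mul]
      linarith [hB, hB0.le, hB0.ge]
  · set s2 := Real.sqrt (1 - a^2) / V with hs2Def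
    set yE : E := y₂ - s2 • v₂ with hyEDef
    have hsV : s2^2 * V^2 = 1 - a^2 := by
      rw [hs2Def, div_pow, Real.sq_sqrt hsq]
      field_simp
    refine ⟨yE, ?_, ?_, ?_⟩
    · have hnorm2 : ‖yE‖^2 = a^2 + (1 - a^2) := by
        rw [hyEDef, norm_sub_sq_real, real_inner_smul_right, hiy₂v₂, norm_smul,
          Real.norm_eq_abs, mul_pow, sq_abs]
        nlinarith [hsV]
      rw [l2_eq_norm]
      have h1 : ‖yE‖^2 = 1 := by rw [hnorm2]; ring
      nlinarith [h1, norm_nonneg yE, sq_nonneg (‖yE‖ - 1)]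
    · have hTv₂ : T' v₂ = 0 := hT'perp v₂ hv₂perp
      have : T' yE = toE c := by
        rw [hyEDef, map_sub, _root_.map_smul, hT'y₂, hTv₂, smul_zero, sub_zero]
      exact congrArg WithLp.ofLp this
    · have hv : v₁ + v₂ = toE v := by rw [hv₂Def]; abel
      have e : dotp (-v) yE = -(inner ℝ (toE v) yE : ℝ) :=
        (dotp_eq_inner _ _).trans (inner_neg_left _ _)
      have c1 : (inner ℝ v₁ y₂ : ℝ) = inner ℝ y₂ v₁ := real_inner_comm _ _
      have c2 : (inner ℝ v₂ y₂ : ℝ) = 0 := (real_inner_comm _ _).trans hiy₂v₂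
      have hi : (inner ℝ (toE v) yE : ℝ) = inner ℝ y₂ v₁ - s2*V^2 := by
        rw [← hv, hyEDef, inner_add_left, inner_sub_right, inner_sub_right,
          real_inner_smul_right, real_inner_smul_right, hiv₁v₂,
          real_inner_self_eq_norm_sq, c1, c2]
        ring
      have hfin : s2 * V^2 = V * Real.sqrt (1-a^2) := by
        rw [hs2Def]
        field_simp
      rw [e, hi]
      linarith [hB, hfin.le, hfin.ge]

lemma nonneg_of_forall_le_mul {L s : ℝ} (h : ∀ t : ℝ, 0 < t → L ≤ t * s) : 0 ≤ s := by
  by_contra hs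
  push_neg at hs
  have hnum : min L 0 - 1 < 0 := by
    have := min_le_right L 0
    linarith
  have ht : 0 < (min L 0 - 1) / s := div_pos_of_neg_of_neg hnum hs
  have := h _ ht
  rw [div_mul_cancel₀ _ (ne_of_lt hs)] at this
  have := min_le_left L 0
  linarith

lemma l1_zero {k : ℕ} : l1 (0 : Fin k → ℝ) = 0 := by simp [l1]

lemma l1_smul {k : ℕ} (t : ℝ) (x : Fin k → ℝ) : l1 (t • x) = |t| * l1 x := by
  simp [l1, abs_mul, Finset.mul_sum]

lemma l1_add_le {k : ℕ} (x y : Fin k → ℝ) : l1 (x + y) ≤ l1 x + l1 y := by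
  rw [l1, l1, l1, ← Finset.sum_add_distrib]
  exact Finset.sum_le_sum fun i _ => abs_add_le _ _

lemma l1_convex {k : ℕ} (x y : Fin k → ℝ) {θ τ : ℝ} (hθ : 0 ≤ θ) (hτ : 0 ≤ τ) :
    l1 (θ • x + τ • y) ≤ θ * l1 x + τ * l1 y := by
  calc l1 (θ • x + τ • y) ≤ l1 (θ • x) + l1 (τ • y) := l1_add_le _ _
    _ = θ * l1 x + τ * l1 y := by rw [l1_smul, l1_smul, abs_of_nonneg hθ, abs_of_nonneg hτ]

lemma l1_continuous {k : ℕ} : Continuous (fun x : Fin k → ℝ => l1 x) := by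
  unfold l1
  exact continuous_finset_sum _ fun i _ => (continuous_apply i).abs

lemma dotp_single {k : ℕ} (c : Fin k → ℝ) (j : Fin k) :
    dotp c (fun i => if i = j then (1:ℝ) else 0) = c j := by
  rw [dotp]
  rw [Finset.sum_eq_single j]
  · simp
  · intro i _ hij
    simp [hij]
  · simp

/-- Strong duality: existence of a dual feasible point attaining the optimal
primal value. -/
lemma strong_exists {m n : ℕ} {A : Matrix (Fin m) (Fin n) ℝ} {b : Fin m → ℝ}
    {lam : ℝ} (hlam : 0 < lam) {xbar : Fin n → ℝ} (hp : IsSol A b lam xbar) :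
    ∃ y : Fin m → ℝ, DualFeas A lam y ∧ dotp b y = srObj A b lam xbar := by
  classical
  set v : Fin m → ℝ := b - A.mulVec xbar with hv
  set F : ℝ := srObj A b lam xbar with hF
  set g : (Fin n → ℝ) → ℝ := fun d => F - lam * l1 (xbar + d) with hg
  set q : (Fin n → ℝ) → ℝ := fun d => l2 (A.mulVec d - v) with hq
  have hshift : ∀ d : Fin n → ℝ, A.mulVec (xbar + d) - b = A.mulVec d - v := by
    intro d
    rw [Matrix.mulVec_add, hv]
    abel
  have hle : ∀ d, g d ≤ q d := by
    intro d
    have h0 := hp (xbar + d)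
    have h2 : srObj A b lam (xbar + d) = l2 (A.mulVec d - v) + lam * l1 (xbar + d) := by
      rw [srObj, hshift d]
    rw [h2] at h0
    rw [hg, hq]
    dsimp only
    rw [hF]
    linarith
  have hgc : ∀ x y θ τ : _, 0 ≤ θ → 0 ≤ τ → θ + τ = 1 →
      θ * g x + τ * g y ≤ g (θ • x + τ • y) := by
    intro x y θ τ hθ hτ hsum
    have hcomb : xbar + (θ • x + τ • y) = θ • (xbar + x) + τ • (xbar + y) := by
      funext i
      simp only [Pi.add_apply, Pi.smul_apply, smul_eq_mul]
      linear_combination (xbar i) * hsum.symm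
    rw [hg]
    dsimp only
    rw [hcomb]
    have hcv := l1_convex (xbar + x) (xbar + y) hθ hτ
    have hFθ : θ * F + τ * F = F := by rw [← add_mul, hsum, one_mul]
    nlinarith [hFθ, mul_le_mul_of_nonneg_left hcv hlam.le]
  have hqc : ∀ x y θ τ : _, 0 ≤ θ → 0 ≤ τ → θ + τ = 1 →
      q (θ • x + τ • y) ≤ θ * q x + τ * q y := by
    intro x y θ τ hθ hτ hsum
    have hcomb : A.mulVec (θ • x + τ • y) - v
        = θ • (A.mulVec x - v) + τ • (A.mulVec y - v) := by
      funext i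
      simp only [Matrix.mulVec_add, Matrix.mulVec_smul, Pi.add_apply, Pi.sub_apply,
        Pi.smul_apply, smul_eq_mul]
      linear_combination (-(v i)) * hsum.symm
    rw [hq]
    dsimp only
    rw [hcomb]
    calc l2 (θ • (A.mulVec x - v) + τ • (A.mulVec y - v))
        ≤ l2 (θ • (A.mulVec x - v)) + l2 (τ • (A.mulVec y - v)) := l2_add_le _ _
      _ = θ * l2 (A.mulVec x - v) + τ * l2 (A.mulVec y - v) := by
          rw [l2_smul, l2_smul, abs_of_nonneg hθ, abs_of_nonneg hτ]
  have hgcont : Continuous g := by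
    rw [hg]
    exact continuous_const.sub (continuous_const.mul
      (l1_continuous.comp (continuous_const.add continuous_id)))
  obtain ⟨c, β, hcβ⟩ := sandwich g q hgc hqc hgcont hle
  -- key derived facts
  have hK0 : F + dotp c xbar - β ≤ 0 := by
    have := (hcβ (-xbar)).1
    rw [hg] at this
    dsimp only at this
    rw [add_neg_cancel, l1_zero, mul_zero, sub_zero, dotp_neg_right] at this
    linarith
  have habs : ∀ j, |c j| ≤ lam := by
    intro j
    set ej : Fin n → ℝ := fun i => if i = j then (1:ℝ) else 0 with hej
    have hl1ej : l1 ej = 1 := by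
      rw [l1, hej]
      rw [Finset.sum_eq_single j] <;> simp +contextual
    have key : ∀ (σ : ℝ), σ = 1 ∨ σ = -1 →
        0 ≤ σ * c j + lam := by
      intro σ hσ
      apply nonneg_of_forall_le_mul (L := F + dotp c xbar - β)
      intro t ht
      have h1 := (hcβ (-xbar + (t * σ) • ej)).1
      rw [hg] at h1
      dsimp only at h1
      have e1 : xbar + (-xbar + (t * σ) • ej) = (t * σ) • ej := by abel
      rw [e1, l1_smul, hl1ej, mul_one, dotp_add_right, dotp_neg_right,
        dotp_smul_right, dotp_single] at h1
      have habsσ : |t * σ| = t := by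
        rcases hσ with h | h <;> rw [h] <;>
          simp [abs_of_pos ht, abs_of_nonneg (le_of_lt ht)]
      rw [habsσ] at h1
      have : F + dotp c xbar - β ≤ t * σ * c j + lam * t := by linarith
      calc F + dotp c xbar - β ≤ t * σ * c j + lam * t := this
        _ = t * (σ * c j + lam) := by ring
    have k1 := key 1 (Or.inl rfl)
    have k2 := key (-1) (Or.inr rfl)
    rw [abs_le]
    constructor <;> nlinarith
  obtain ⟨y, hy1, hy2, hy3⟩ := represent A v c β (fun d => (hcβ d).2)
  refine ⟨-y, ⟨?_, ?_⟩, ?_⟩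
  · have hAy : Aᵀ.mulVec (-y) = -c := by rw [Matrix.mulVec_neg, hy2]
    rw [hAy]
    exact linf_le _ hlam.le fun i => by rw [Pi.neg_apply, abs_neg]; exact habs i
  · rw [show (-y : Fin m → ℝ) = (-1 : ℝ) • y by funext i; simp, l2_smul]
    simpa using hy1
  · have hbdec : dotp b (-y) = dotp v (-y) + dotp (A.mulVec xbar) (-y) := by
      rw [← dotp_add_left, hv]
      norm_num
    have e2 : dotp v (-y) = dotp (-v) y := by simp [dotp, mul_comm]
    have e3 : dotp (A.mulVec xbar) (-y) = -dotp c xbar := by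
      rw [dotp_mulVec, Matrix.mulVec_neg, hy2]
      simp [dotp, mul_comm]
    have hge : F ≤ dotp b (-y) := by
      rw [hbdec, e2, e3]
      linarith
    have hle' : dotp b (-y) ≤ F := by
      have hfeas : DualFeas A lam (-y) := by
        constructor
        · have hAy : Aᵀ.mulVec (-y) = -c := by rw [Matrix.mulVec_neg, hy2]
          rw [hAy]
          exact linf_le _ hlam.le fun i => by rw [Pi.neg_apply, abs_neg]; exact habs i
        · rw [show (-y : Fin m → ℝ) = (-1 : ℝ) • y by funext i; simp, l2_smul]
          simpa using hy1
      exact weak_duality A b hlam.le xbar hfeas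
    linarith

/-- strong duality characterization: (x̄ solves the SR-LASSO
and ȳ solves its dual) iff (the primal objective at x̄ equals ⟨b, ȳ⟩ and ȳ is
dual feasible). -/
theorem stmt_4 {m n : ℕ} (A : Matrix (Fin m) (Fin n) ℝ) (b : Fin m → ℝ)
    (lam : ℝ) (hlam : 0 < lam) (xbar : Fin n → ℝ) (ybar : Fin m → ℝ) :
    (IsSol A b lam xbar ∧ IsDualSol A b lam ybar)
      ↔ (l2 (A.mulVec xbar - b) + lam * l1 xbar = dotp b ybar ∧
          linf (Aᵀ.mulVec ybar) ≤ lam ∧ l2 ybar ≤ 1) := by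
  constructor
  · rintro ⟨hp, hd⟩
    obtain ⟨y, hyf, hyv⟩ := strong_exists hlam hp
    have h1 : dotp b y ≤ dotp b ybar := hd.2 y hyf
    have h2 : dotp b ybar ≤ srObj A b lam xbar := weak_duality A b hlam.le xbar hd.1
    refine ⟨?_, hd.1.1, hd.1.2⟩
    show srObj A b lam xbar = dotp b ybar
    exact le_antisymm (hyv ▸ h1) h2
  · rintro ⟨heq, hf1, hf2⟩
    have hfeas : DualFeas A lam ybar := ⟨hf1, hf2⟩
    have heq' : srObj A b lam xbar = dotp b ybar := heq
    refine ⟨fun w => ?_, hfeas, fun y' hy' => ?_⟩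
    · calc srObj A b lam xbar = dotp b ybar := heq'
        _ ≤ srObj A b lam w := weak_duality A b hlam.le w hfeas
    · calc dotp b y' ≤ srObj A b lam xbar := weak_duality A b hlam.le xbar hy'
        _ = dotp b ybar := heq'
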